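/- Fix a nonzero real number λ and integers m ≥ 0, r ≥ 0. Let θ be the operator on the formal power series ring ℝ[[x]] given by (θ f)(x) = x·f'(x) (formal derivative), and let (θ)_{m,λ} denote the composite operator θ∘(θ − λ·id)∘···∘(θ − (m−1)λ·id) (the identity operator when m = 0). Then for every f ∈ ℝ[[x]]: (θ)_{m,λ}(x^r · f(x)) = Σ_{l=0}^{m} {m+r brace l+r}_{r,λ} · x^{l+r} · f^{(l)}(x), where f^{(l)} denotes the l-th formal derivative of f. -/

import Mathlib

open Finset PowerSeries

noncomputable section

/-- The degenerate falling factorial `(x)_{n,λ} = x(x-λ)⋯(x-(n-1)λ)`. -/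
def dff (lam x : ℝ) (n : ℕ) : ℝ := ∏ i ∈ Finset.range n, (x - i * lam)

/-- The ordinary falling factorial `(x)_n = x(x-1)⋯(x-n+1)`. -/
def ff (x : ℝ) (n : ℕ) : ℝ := ∏ i ∈ Finset.range n, (x - i)

/-- The operator `θ` on `ℝ[[x]]` given by `(θ f)(x) = x·f'(x)`. -/
def theta (f : PowerSeries ℝ) : PowerSeries ℝ := PowerSeries.X * f.derivativeFun

/-- The composite operator `(θ)_{m,λ} = θ∘(θ-λ)∘⋯∘(θ-(m-1)λ)`, the identity when `m = 0`. -/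
def thetaFall (lam : ℝ) : ℕ → PowerSeries ℝ → PowerSeries ℝ
  | 0 => fun f => f
  | n + 1 => fun f => thetaFall lam n (theta f - ((n : ℝ) * lam) • f)

lemma coeff_derivativeFun' (f : PowerSeries ℝ) (n : ℕ) :
    PowerSeries.coeff (R := ℝ) n f.derivativeFun = PowerSeries.coeff (R := ℝ) (n + 1) f * (n + 1) :=
  coeff_derivative f n

lemma coeff_theta (f : PowerSeries ℝ) (n : ℕ) :
    PowerSeries.coeff (R := ℝ) n (theta f) = n * PowerSeries.coeff (R := ℝ) n f := by
  cases n with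
  | zero => simp [theta]
  | succ k =>
      rw [theta, coeff_succ_X_mul, coeff_derivativeFun']
      push_cast; ring

lemma coeff_thetaFall (lam : ℝ) (m : ℕ) : ∀ (f : PowerSeries ℝ) (n : ℕ),
    PowerSeries.coeff (R := ℝ) n (thetaFall lam m f) = dff lam n m * PowerSeries.coeff (R := ℝ) n f := by
  induction m with
  | zero => intro f n; simp [thetaFall, dff]
  | succ k ih =>
      intro f n
      rw [thetaFall, ih]
      simp only [map_sub, coeff_theta, map_smul, smul_eq_mul]
      simp only [dff, Finset.prod_range_succ]
      ring

lemma ff_succ (x : ℝ) (l : ℕ) : ff x (l + 1) = ff x l * (x - l) := by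
  rw [ff, Finset.prod_range_succ, ← ff]

lemma coeff_iter_deriv (l : ℕ) : ∀ (f : PowerSeries ℝ) (j : ℕ),
    PowerSeries.coeff (R := ℝ) j ((derivativeFun (R := ℝ))^[l] f)
      = ff (j + l) l * PowerSeries.coeff (R := ℝ) (j + l) f := by
  induction l with
  | zero => intro f j; simp [ff]
  | succ k ih =>
      intro f j
      rw [Function.iterate_succ_apply', coeff_derivativeFun', ih, ff_succ]
      have : j + 1 + k = j + (k + 1) := by ring
      rw [this]
      push_cast
      ring

lemma ff_nat_zero (d l : ℕ) (h : d < l) : ff (d : ℝ) l = 0 := by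
  rw [ff]
  exact Finset.prod_eq_zero (Finset.mem_range.mpr h) (by simp)

theorem statement_0 (lam : ℝ) (hlam : lam ≠ 0) (m r : ℕ)
    (S : ℕ → ℕ → ℝ)
    (hS : ∀ (n : ℕ) (x : ℝ), dff lam (x + r) n = ∑ k ∈ Finset.range (n + 1), S n k * ff x k)
    (f : PowerSeries ℝ) :
    thetaFall lam m (PowerSeries.X ^ r * f) =
      ∑ l ∈ Finset.range (m + 1),
        S m l • (PowerSeries.X ^ (l + r) * (derivativeFun (R := ℝ))^[l] f) := by
  ext n
  rw [coeff_thetaFall, PowerSeries.coeff_X_pow_mul', map_sum]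
  simp only [map_smul, smul_eq_mul, PowerSeries.coeff_X_pow_mul', coeff_iter_deriv]
  by_cases hr : r ≤ n
  · obtain ⟨d, rfl⟩ : ∃ d, n = d + r := ⟨n - r, (Nat.sub_add_cancel hr).symm⟩
    rw [if_pos hr]
    have key : dff lam ((d + r : ℕ) : ℝ) m = ∑ k ∈ Finset.range (m + 1), S m k * ff d k := by
      have := hS m d
      push_cast
      push_cast at this
      linarith [this]
    rw [key, Finset.sum_mul]
    refine Finset.sum_congr rfl fun l _ => ?_
    by_cases hl : l ≤ d
    · rw [if_pos (by omega)]
      have h1 : d + r - (l + r) = d - l := by omega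
      have h3 : d - l + l = d := by omega
      rw [h1, ← Nat.cast_add, h3, Nat.add_sub_cancel]
      ring
    · rw [if_neg (by omega), ff_nat_zero d l (by omega)]
      ring
  · rw [if_neg hr]
    rw [mul_zero]
    refine (Finset.sum_eq_zero fun l _ => ?_).symm
    rw [if_neg (by omega), mul_zero]
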